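/- arXiv:2412.09477 — 2 statements merged into one kernel-verified Lean document; each statement's English description precedes it below -/
import Mathlib

section
/- The matrix S₀⁻¹ + σ⁻² Σ_{t=1}^T φ_t φ_tᵀ is positive definite (so S_T and w̄_T are well defined), S_T is positive definite, and the pair (w̄_T, S_T) is the unique global maximizer of the variational objective L: for every w̄ ∈ ℝ^m and every positive-definite S ∈ ℝ^{m×m} with (w̄, S) ≠ (w̄_T, S_T), one has L(w̄, S) < L(w̄_T, S_T). In other words, the maximizer of the variational lower bound equals the posterior computed by recursive least squares (Theorem 1). -/
open Matrix Real BigOperators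

/-- Scalar Gaussian density `N(y; μ, s2)`. -/
noncomputable def gaussPdf1 (y μ s2 : ℝ) : ℝ :=
  (2 * Real.pi * s2) ^ (-(1 : ℝ) / 2) * Real.exp (-(y - μ) ^ 2 / (2 * s2))

/-- Gaussian KL divergence between `N(μ₁, C₁)` and `N(μ₂, C₂)` (closed form). -/
noncomputable def gaussKL {m : ℕ} (μ₁ μ₂ : Fin m → ℝ)
    (C₁ C₂ : Matrix (Fin m) (Fin m) ℝ) : ℝ :=
  (1 / 2) * ((C₂⁻¹ * C₁).trace + (μ₂ - μ₁) ⬝ᵥ (C₂⁻¹ *ᵥ (μ₂ - μ₁)) - (m : ℝ)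
      + Real.log C₂.det - Real.log C₁.det)

/-- Posterior precision `S₀⁻¹ + σ⁻² ∑ₜ φₜ φₜᵀ`. -/
noncomputable def postPrec {m T : ℕ} (φ : Fin T → Fin m → ℝ) (σ2 : ℝ)
    (S0 : Matrix (Fin m) (Fin m) ℝ) : Matrix (Fin m) (Fin m) ℝ :=
  S0⁻¹ + σ2⁻¹ • ∑ t, vecMulVec (φ t) (φ t)

/-- Posterior covariance `S_T`. -/
noncomputable def postCov {m T : ℕ} (φ : Fin T → Fin m → ℝ) (σ2 : ℝ)
    (S0 : Matrix (Fin m) (Fin m) ℝ) : Matrix (Fin m) (Fin m) ℝ :=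
  (postPrec φ σ2 S0)⁻¹

/-- Posterior mean `wb_T`. -/
noncomputable def postMean {m T : ℕ} (φ : Fin T → Fin m → ℝ) (y : Fin T → ℝ) (σ2 : ℝ)
    (w0 : Fin m → ℝ) (S0 : Matrix (Fin m) (Fin m) ℝ) : Fin m → ℝ :=
  (postCov φ σ2 S0) *ᵥ (S0⁻¹ *ᵥ w0 + σ2⁻¹ • ∑ t, y t • φ t)

/-- Variational objective `L(wb, S)`. -/
noncomputable def Lobj {m T : ℕ} (φ : Fin T → Fin m → ℝ) (y : Fin T → ℝ) (σ2 : ℝ)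
    (w0 : Fin m → ℝ) (S0 : Matrix (Fin m) (Fin m) ℝ)
    (wb : Fin m → ℝ) (S : Matrix (Fin m) (Fin m) ℝ) : ℝ :=
  (∑ t, (Real.log (gaussPdf1 (y t) (wb ⬝ᵥ φ t) σ2)
      - (1 / 2) * σ2⁻¹ * (φ t ⬝ᵥ (S *ᵥ φ t))))
    - gaussKL wb w0 S S0

set_option linter.unusedSectionVars false
set_option maxHeartbeats 1000000

section AuxHelpers

variable {n : Type*} [Fintype n] [DecidableEq n]

lemma aux_vecMulVec_mulVec (u v w : n → ℝ) : vecMulVec u v *ᵥ w = (v ⬝ᵥ w) • u := by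
  ext i
  simp only [mulVec, vecMulVec_apply, dotProduct, Pi.smul_apply, smul_eq_mul, Finset.sum_mul]
  exact Finset.sum_congr rfl fun j _ => by ring

lemma aux_dot_symm {A : Matrix n n ℝ} (hA : A.IsHermitian) (x y : n → ℝ) :
    x ⬝ᵥ (A *ᵥ y) = y ⬝ᵥ (A *ᵥ x) := by
  simp only [dotProduct, mulVec, Finset.mul_sum]
  rw [Finset.sum_comm]
  refine Finset.sum_congr rfl fun i _ => Finset.sum_congr rfl fun j _ => ?_
  have h : A j i = A i j := by simpa using hA.apply i j
  rw [h]; ring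

lemma aux_trace_vecMulVec_mul (u : n → ℝ) (S : Matrix n n ℝ) :
    (vecMulVec u u * S).trace = u ⬝ᵥ (S *ᵥ u) := by
  simp only [trace, diag, mul_apply, vecMulVec_apply, dotProduct, mulVec, Finset.mul_sum]
  rw [Finset.sum_comm]
  exact Finset.sum_congr rfl fun i _ => Finset.sum_congr rfl fun j _ => by ring

lemma aux_posDef_of_psd_det_ne_zero {A : Matrix n n ℝ} (hA : A.PosSemidef)
    (hd : A.det ≠ 0) : A.PosDef := by
  refine PosDef.of_dotProduct_mulVec_pos hA.1 fun x hx => ?_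
  rcases lt_or_eq_of_le (hA.dotProduct_mulVec_nonneg x) with h | h
  · simpa using h
  · exact absurd (Matrix.eq_zero_of_mulVec_eq_zero hd
      ((hA.dotProduct_mulVec_zero_iff x).mp (by simpa using h.symm))) hx

open scoped MatrixOrder in
lemma aux_trace_sub_logdet {P S : Matrix n n ℝ} (hP : P.PosDef) (hS : S.PosDef) :
    ((Fintype.card n : ℝ) ≤ (P * S).trace - Real.log ((P * S).det)) ∧
      (S ≠ P⁻¹ → (Fintype.card n : ℝ) < (P * S).trace - Real.log ((P * S).det)) := by
  set R := CFC.sqrt P with hRdef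
  have hR2 : R * R = P := CFC.sqrt_mul_sqrt_self P hP.posSemidef.nonneg
  have hRsd : R.PosSemidef := (CFC.sqrt_nonneg P).posSemidef
  have hdR : R.det ≠ 0 := by
    intro h
    have : P.det = 0 := by rw [← hR2, det_mul, h, mul_zero]
    exact hP.det_pos.ne' this
  set B := R * S * R with hBdef
  have hBsd : B.PosSemidef := by
    have := hS.posSemidef.mul_mul_conjTranspose_same R
    rwa [hRsd.1] at this
  have hdB : B.det ≠ 0 := by
    simp only [hBdef, det_mul]
    exact mul_ne_zero (mul_ne_zero hdR hS.det_pos.ne') hdR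
  have hBpd : B.PosDef := aux_posDef_of_psd_det_ne_zero hBsd hdB
  have hBh : B.IsHermitian := hBpd.1
  set lam := hBh.eigenvalues with hlam
  have hlampos : ∀ i, 0 < lam i := hBpd.eigenvalues_pos
  set U : Matrix n n ℝ := (hBh.eigenvectorUnitary : Matrix n n ℝ) with hU
  have hUU : (U : Matrix n n ℝ) * star U = 1 :=
    (Matrix.mem_unitaryGroup_iff).mp hBh.eigenvectorUnitary.2
  have hUU' : star (U : Matrix n n ℝ) * U = 1 :=
    (Matrix.mem_unitaryGroup_iff').mp hBh.eigenvectorUnitary.2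
  have hdiag : (RCLike.ofReal ∘ lam : n → ℝ) = lam := by funext i; simp
  have htraceB : B.trace = ∑ i, lam i := by
    conv_lhs => rw [hBh.spectral_theorem]
    simp only [Unitary.conjStarAlgAut_apply, Unitary.coe_star]
    rw [trace_mul_cycle, hUU', one_mul, trace_diagonal]
    simp [hlam]
  have hdetB : B.det = ∏ i, lam i := by
    rw [hBh.det_eq_prod_eigenvalues]; simp [hlam]
  have htr : (P * S).trace = ∑ i, lam i := by
    rw [← htraceB, hBdef, trace_mul_cycle, hR2]
  have hdet : (P * S).det = B.det := by
    rw [det_mul, ← hR2, hBdef, det_mul, det_mul, det_mul]; ring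
  have hlog : Real.log ((P * S).det) = ∑ i, Real.log (lam i) := by
    rw [hdet, hdetB, Real.log_prod]
    exact fun i _ => (hlampos i).ne'
  have hterm : ∀ i, (1 : ℝ) ≤ lam i - Real.log (lam i) := by
    intro i
    have := Real.log_le_sub_one_of_pos (hlampos i)
    linarith
  have hsum : (P * S).trace - Real.log ((P * S).det) = ∑ i, (lam i - Real.log (lam i)) := by
    rw [htr, hlog, Finset.sum_sub_distrib]
  constructor
  · rw [hsum]
    calc (Fintype.card n : ℝ) = ∑ _i : n, (1:ℝ) := by simp
    _ ≤ _ := Finset.sum_le_sum fun i _ => hterm i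
  · intro hne
    by_cases hall : ∀ i, lam i = 1
    · exfalso
      apply hne
      have hB1 : B = 1 := by
        conv_lhs => rw [hBh.spectral_theorem]
        have hd1 : diagonal (RCLike.ofReal ∘ lam : n → ℝ) = 1 := by
          rw [hdiag]
          have : lam = fun _ => (1:ℝ) := funext hall
          rw [this, diagonal_one]
        simp only [Unitary.conjStarAlgAut_apply, Unitary.coe_star]
        rw [hd1, mul_one, hUU]
      have hS' : S = R⁻¹ * B * R⁻¹ := by
        rw [hBdef, ← Matrix.mul_assoc, ← Matrix.mul_assoc,
          Matrix.nonsing_inv_mul R hdR.isUnit, Matrix.one_mul, Matrix.mul_assoc,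
          Matrix.mul_nonsing_inv R hdR.isUnit, Matrix.mul_one]
      rw [hB1, Matrix.mul_one, ← Matrix.mul_inv_rev, hR2] at hS'
      exact hS'
    · push_neg at hall
      obtain ⟨i0, hi0⟩ := hall
      rw [hsum]
      calc (Fintype.card n : ℝ) = ∑ _i : n, (1:ℝ) := by simp
      _ < _ := by
        refine Finset.sum_lt_sum (fun i _ => hterm i) ⟨i0, Finset.mem_univ _, ?_⟩
        have := Real.log_lt_sub_one_of_pos (hlampos i0) hi0
        linarith

lemma aux_sum_mulVec {T : ℕ} (M : Fin T → Matrix n n ℝ) (x : n → ℝ) :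
    (∑ t, M t) *ᵥ x = ∑ t, M t *ᵥ x := by
  ext i
  simp only [mulVec, dotProduct, Matrix.sum_apply, Finset.sum_mul, Finset.sum_apply]
  exact Finset.sum_comm

lemma aux_psd_smul_sum {T : ℕ} (φ : Fin T → n → ℝ) {c : ℝ} (hc : 0 ≤ c) :
    (c • ∑ t, vecMulVec (φ t) (φ t) : Matrix n n ℝ).PosSemidef := by
  refine PosSemidef.of_dotProduct_mulVec_nonneg ?_ ?_
  · ext i j
    simp only [conjTranspose_apply, Matrix.smul_apply, Matrix.sum_apply, vecMulVec_apply,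
      star_trivial, smul_eq_mul]
    rw [Finset.mul_sum, Finset.mul_sum]
    exact Finset.sum_congr rfl fun t _ => by ring
  · intro x
    rw [smul_mulVec, dotProduct_smul]
    simp only [star_trivial, smul_eq_mul]
    apply mul_nonneg hc
    rw [aux_sum_mulVec]
    rw [show x ⬝ᵥ (∑ t, vecMulVec (φ t) (φ t) *ᵥ x) = ∑ t, x ⬝ᵥ (vecMulVec (φ t) (φ t) *ᵥ x) by
      simp [dotProduct, Finset.sum_apply, Finset.mul_sum]; exact Finset.sum_comm]
    refine Finset.sum_nonneg fun t _ => ?_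
    rw [aux_vecMulVec_mulVec, dotProduct_smul, smul_eq_mul, dotProduct_comm]
    exact mul_self_nonneg _

end AuxHelpers

section SpecHelpers

variable {m T : ℕ}

lemma aux_log_gauss {σ2 : ℝ} (h : 0 < σ2) (yv μ : ℝ) :
    Real.log (gaussPdf1 yv μ σ2) =
      (-(1:ℝ)/2) * Real.log (2 * Real.pi * σ2) - (yv - μ)^2 / (2 * σ2) := by
  have h2 : (0:ℝ) < 2 * Real.pi * σ2 := by positivity
  unfold gaussPdf1
  rw [Real.log_mul (Real.rpow_pos_of_pos h2 _).ne' (Real.exp_ne_zero _),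
    Real.log_rpow h2, Real.log_exp]
  ring

lemma aux_postPrec_posDef (φ : Fin T → Fin m → ℝ) {σ2 : ℝ} (hσ2 : 0 < σ2)
    {S0 : Matrix (Fin m) (Fin m) ℝ} (hS0 : S0.PosDef) : (postPrec φ σ2 S0).PosDef :=
  hS0.inv.add_posSemidef (aux_psd_smul_sum φ (inv_nonneg.mpr hσ2.le))

lemma aux_trace_postPrec_mul (φ : Fin T → Fin m → ℝ) (σ2 : ℝ)
    (S0 S : Matrix (Fin m) (Fin m) ℝ) :
    (postPrec φ σ2 S0 * S).trace
      = (S0⁻¹ * S).trace + σ2⁻¹ * ∑ t, φ t ⬝ᵥ (S *ᵥ φ t) := by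
  unfold postPrec
  rw [Matrix.add_mul, trace_add, Matrix.smul_mul, trace_smul, Matrix.sum_mul, trace_sum,
    smul_eq_mul,
    show ∑ t, (vecMulVec (φ t) (φ t) * S).trace = ∑ t, φ t ⬝ᵥ (S *ᵥ φ t) from
      Finset.sum_congr rfl fun t _ => aux_trace_vecMulVec_mul _ _]

lemma aux_dotProduct_sum' (x : Fin m → ℝ) (v : Fin T → Fin m → ℝ) :
    x ⬝ᵥ (∑ t, v t) = ∑ t, x ⬝ᵥ v t := by
  simp only [dotProduct, Finset.sum_apply, Finset.mul_sum]
  exact Finset.sum_comm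

lemma aux_quad_expansion (φ : Fin T → Fin m → ℝ) (y : Fin T → ℝ) {σ2 : ℝ} (hσ2 : 0 < σ2)
    (w0 : Fin m → ℝ) {S0 : Matrix (Fin m) (Fin m) ℝ} (hS0 : S0.PosDef) (w : Fin m → ℝ) :
    (∑ t, (y t - w ⬝ᵥ φ t)^2) / (2 * σ2) + (1/2) * ((w0 - w) ⬝ᵥ (S0⁻¹ *ᵥ (w0 - w)))
      = (1/2) * (w ⬝ᵥ (postPrec φ σ2 S0 *ᵥ w))
        - w ⬝ᵥ (S0⁻¹ *ᵥ w0 + σ2⁻¹ • ∑ t, y t • φ t)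
        + ((∑ t, (y t)^2) / (2 * σ2) + (1/2) * (w0 ⬝ᵥ (S0⁻¹ *ᵥ w0))) := by
  have h1 : w ⬝ᵥ (postPrec φ σ2 S0 *ᵥ w)
      = w ⬝ᵥ (S0⁻¹ *ᵥ w) + σ2⁻¹ * ∑ t, (w ⬝ᵥ φ t)^2 := by
    unfold postPrec
    rw [Matrix.add_mulVec, dotProduct_add, smul_mulVec, dotProduct_smul, smul_eq_mul,
      aux_sum_mulVec, aux_dotProduct_sum']
    congr 2
    refine Finset.sum_congr rfl fun t _ => ?_
    rw [aux_vecMulVec_mulVec, dotProduct_smul, smul_eq_mul, dotProduct_comm (φ t) w, sq]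
  have h2 : w ⬝ᵥ (S0⁻¹ *ᵥ w0 + σ2⁻¹ • ∑ t, y t • φ t)
      = w ⬝ᵥ (S0⁻¹ *ᵥ w0) + σ2⁻¹ * ∑ t, y t * (w ⬝ᵥ φ t) := by
    rw [dotProduct_add, dotProduct_smul, smul_eq_mul, aux_dotProduct_sum']
    congr 2
    exact Finset.sum_congr rfl fun t _ => by rw [dotProduct_smul, smul_eq_mul]
  have h3 : (w0 - w) ⬝ᵥ (S0⁻¹ *ᵥ (w0 - w))
      = w0 ⬝ᵥ (S0⁻¹ *ᵥ w0) - 2 * (w ⬝ᵥ (S0⁻¹ *ᵥ w0)) + w ⬝ᵥ (S0⁻¹ *ᵥ w) := by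
    rw [Matrix.mulVec_sub, dotProduct_sub, sub_dotProduct, sub_dotProduct,
      aux_dot_symm hS0.inv.isHermitian w0 w]
    ring
  have h4 : ∑ t, (y t - w ⬝ᵥ φ t)^2
      = (∑ t, (y t)^2) - 2 * (∑ t, y t * (w ⬝ᵥ φ t)) + ∑ t, (w ⬝ᵥ φ t)^2 := by
    rw [Finset.mul_sum, ← Finset.sum_sub_distrib, ← Finset.sum_add_distrib]
    exact Finset.sum_congr rfl fun t _ => by ring
  rw [h1, h2, h3, h4]
  have hs : σ2 ≠ 0 := hσ2.ne'
  field_simp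
  ring

lemma aux_postMean_eq (φ : Fin T → Fin m → ℝ) (y : Fin T → ℝ) {σ2 : ℝ} (hσ2 : 0 < σ2)
    (w0 : Fin m → ℝ) {S0 : Matrix (Fin m) (Fin m) ℝ} (hS0 : S0.PosDef) :
    postPrec φ σ2 S0 *ᵥ postMean φ y σ2 w0 S0
      = S0⁻¹ *ᵥ w0 + σ2⁻¹ • ∑ t, y t • φ t := by
  have hP := aux_postPrec_posDef φ hσ2 hS0
  unfold postMean postCov
  rw [Matrix.mulVec_mulVec, Matrix.mul_nonsing_inv _ hP.det_pos.ne'.isUnit, Matrix.one_mulVec]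

lemma aux_Lobj_eq (φ : Fin T → Fin m → ℝ) (y : Fin T → ℝ) {σ2 : ℝ} (hσ2 : 0 < σ2)
    (w0 : Fin m → ℝ) (S0 : Matrix (Fin m) (Fin m) ℝ)
    (w : Fin m → ℝ) (S : Matrix (Fin m) (Fin m) ℝ) :
    Lobj φ y σ2 w0 S0 w S
      = (T:ℝ) * ((-(1:ℝ)/2) * Real.log (2 * Real.pi * σ2))
        - (∑ t, (y t - w ⬝ᵥ φ t)^2) / (2 * σ2)
        - (1/2) * (postPrec φ σ2 S0 * S).trace
        - (1/2) * ((w0 - w) ⬝ᵥ (S0⁻¹ *ᵥ (w0 - w)))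
        + (m:ℝ)/2 - (1/2) * Real.log S0.det + (1/2) * Real.log S.det := by
  unfold Lobj gaussKL
  rw [aux_trace_postPrec_mul, Finset.sum_sub_distrib]
  have h1 : ∑ t, Real.log (gaussPdf1 (y t) (w ⬝ᵥ φ t) σ2)
      = (T:ℝ) * ((-(1:ℝ)/2) * Real.log (2 * Real.pi * σ2))
        - (∑ t, (y t - w ⬝ᵥ φ t)^2) / (2 * σ2) := by
    rw [Finset.sum_congr rfl fun t _ => aux_log_gauss hσ2 (y t) (w ⬝ᵥ φ t),
      Finset.sum_sub_distrib, Finset.sum_const, Finset.card_univ, Fintype.card_fin,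
      nsmul_eq_mul, Finset.sum_div]
  have h2 : ∑ t, (1/2) * σ2⁻¹ * (φ t ⬝ᵥ (S *ᵥ φ t))
      = (1/2) * σ2⁻¹ * ∑ t, φ t ⬝ᵥ (S *ᵥ φ t) := by
    rw [Finset.mul_sum]
  rw [h1, h2]
  ring

end SpecHelpers

/-- The maximizer of the variational lower bound equals the recursive least
squares posterior `(wb_T, S_T)`, and is unique. -/
theorem stmt0 (m T : ℕ) (hm : 1 ≤ m) (hT : 1 ≤ T)
    (φ : Fin T → Fin m → ℝ) (y : Fin T → ℝ)
    (σ2 : ℝ) (hσ2 : 0 < σ2) (w0 : Fin m → ℝ)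
    (S0 : Matrix (Fin m) (Fin m) ℝ) (hS0 : S0.PosDef) :
    (postPrec φ σ2 S0).PosDef ∧ (postCov φ σ2 S0).PosDef ∧
      ∀ (wb : Fin m → ℝ) (S : Matrix (Fin m) (Fin m) ℝ), S.PosDef →
        (wb, S) ≠ (postMean φ y σ2 w0 S0, postCov φ σ2 S0) →
        Lobj φ y σ2 w0 S0 wb S
          < Lobj φ y σ2 w0 S0 (postMean φ y σ2 w0 S0) (postCov φ σ2 S0) := by
  have hP := aux_postPrec_posDef φ hσ2 hS0
  have hPinv : (postCov φ σ2 S0).PosDef := hP.inv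
  refine ⟨hP, hPinv, ?_⟩
  intro wb S hS hne
  set ws := postMean φ y σ2 w0 S0 with hws
  rw [aux_Lobj_eq φ y hσ2 w0 S0 wb S, aux_Lobj_eq φ y hσ2 w0 S0 ws (postCov φ σ2 S0)]
  set P := postPrec φ σ2 S0 with hPdef
  have hcov : postCov φ σ2 S0 = P⁻¹ := rfl
  have hPP : P * P⁻¹ = 1 := Matrix.mul_nonsing_inv _ hP.det_pos.ne'.isUnit
  have htrcov : (P * postCov φ σ2 S0).trace = (m:ℝ) := by
    rw [hcov, hPP, trace_one]; simp
  have hlogcov : Real.log (postCov φ σ2 S0).det = - Real.log P.det := by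
    rw [hcov, Matrix.det_nonsing_inv, Ring.inverse_eq_inv, Real.log_inv]
  have hlogPS : Real.log ((P * S).det) = Real.log P.det + Real.log S.det := by
    rw [det_mul, Real.log_mul hP.det_pos.ne' hS.det_pos.ne']
  have hKey := aux_trace_sub_logdet hP hS
  rw [Fintype.card_fin] at hKey
  have hb := aux_postMean_eq φ y hσ2 w0 hS0
  have e1 := aux_quad_expansion φ y hσ2 w0 hS0 wb
  have e2 := aux_quad_expansion φ y hσ2 w0 hS0 ws
  set d := wb - ws with hd
  have hdot : d ⬝ᵥ (P *ᵥ d)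
      = wb ⬝ᵥ (P *ᵥ wb) - 2*(wb ⬝ᵥ (P *ᵥ ws)) + ws ⬝ᵥ (P *ᵥ ws) := by
    rw [hd, Matrix.mulVec_sub, dotProduct_sub, sub_dotProduct, sub_dotProduct,
      aux_dot_symm hP.isHermitian ws wb]
    ring
  have hwb_b : wb ⬝ᵥ (S0⁻¹ *ᵥ w0 + σ2⁻¹ • ∑ t, y t • φ t) = wb ⬝ᵥ (P *ᵥ ws) := by
    rw [← hb]
  have hws_b : ws ⬝ᵥ (S0⁻¹ *ᵥ w0 + σ2⁻¹ • ∑ t, y t • φ t) = ws ⬝ᵥ (P *ᵥ ws) := by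
    rw [← hb]
  by_cases hw : wb = ws
  · have hSne : S ≠ postCov φ σ2 S0 := fun h => hne (by rw [hw, h])
    have hk := hKey.2 (by rw [← hcov]; exact hSne)
    rw [hw]
    linarith [htrcov, hlogcov, hlogPS, hk]
  · have hdne : d ≠ 0 := sub_ne_zero.mpr hw
    have hpos : 0 < d ⬝ᵥ (P *ᵥ d) := by
      have := hP.dotProduct_mulVec_pos hdne
      simpa using this
    linarith [e1, e2, hdot, hwb_b, hws_b, htrcov, hlogcov, hlogPS, hKey.1, hpos]
end

section
/- The variational objective L is strictly concave on ℝ^m × {positive-definite m×m matrices}: for all (w̄₁, S₁) ≠ (w̄₂, S₂) with S₁, S₂ positive definite and every λ ∈ (0,1), the matrix λS₁ + (1−λ)S₂ is positive definite and L(λw̄₁ + (1−λ)w̄₂, λS₁ + (1−λ)S₂) > λ L(w̄₁, S₁) + (1−λ) L(w̄₂, S₂). -/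
open Matrix Real BigOperators

lemma posDef_smul {n : ℕ} {M : Matrix (Fin n) (Fin n) ℝ} (hM : M.PosDef) {c : ℝ} (hc : 0 < c) :
    (c • M).PosDef := by
  refine Matrix.PosDef.of_dotProduct_mulVec_pos ?_ ?_
  · unfold Matrix.IsHermitian at *
    rw [conjTranspose_smul, hM.1]
    simp
  · intro x hx
    have := hM.dotProduct_mulVec_pos hx
    simp only [smul_mulVec, dotProduct_smul, smul_eq_mul] at *
    positivity

lemma posDef_combo {n : ℕ} {A B : Matrix (Fin n) (Fin n) ℝ} (hA : A.PosDef) (hB : B.PosDef)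
    {l : ℝ} (h0 : 0 < l) (h1 : l < 1) : (l • A + (1 - l) • B).PosDef :=
  (posDef_smul hA h0).add (posDef_smul hB (by linarith))


lemma dot_symm {n : ℕ} {A : Matrix (Fin n) (Fin n) ℝ} (hA : Aᵀ = A) (x y : Fin n → ℝ) :
    x ⬝ᵥ A *ᵥ y = y ⬝ᵥ A *ᵥ x := by
  rw [dotProduct_mulVec, ← mulVec_transpose, hA, dotProduct_comm]

lemma quad_combo {n : ℕ} {A : Matrix (Fin n) (Fin n) ℝ} (hA : Aᵀ = A) (u v : Fin n → ℝ) (l : ℝ) :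
    (l • u + (1-l) • v) ⬝ᵥ A *ᵥ (l • u + (1-l) • v)
      = l * (u ⬝ᵥ A *ᵥ u) + (1-l) * (v ⬝ᵥ A *ᵥ v) - l * (1-l) * ((u-v) ⬝ᵥ A *ᵥ (u-v)) := by
  have h := dot_symm hA u v
  simp only [mulVec_add, mulVec_smul, dotProduct_add, add_dotProduct, dotProduct_smul,
    smul_dotProduct, smul_eq_mul, sub_eq_add_neg, neg_dotProduct, dotProduct_neg, mulVec_neg,
    mulVec_add] at *
  ring_nf



lemma posDef_conj {n : ℕ} {B M : Matrix (Fin n) (Fin n) ℝ} (hB : B.PosDef)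
    (hdet : IsUnit M.det) : (Mᵀ * B * M).PosDef := by
  refine Matrix.PosDef.of_dotProduct_mulVec_pos ?_ ?_
  · have hBh := hB.isHermitian
    unfold Matrix.IsHermitian at *
    rw [show (Mᵀ * B * M)ᴴ = Mᴴ * Bᴴ * (Mᵀ)ᴴ by rw [conjTranspose_mul, conjTranspose_mul]; rw [mul_assoc]]
    simp only [conjTranspose_eq_transpose_of_trivial] at *
    rw [hBh, transpose_transpose]
  · intro x hx
    have hMx : M *ᵥ x ≠ 0 := by
      intro h
      apply hx
      have : M⁻¹ *ᵥ (M *ᵥ x) = x := by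
        rw [mulVec_mulVec, nonsing_inv_mul _ hdet, one_mulVec]
      rw [← this, h, mulVec_zero]
    have := hB.dotProduct_mulVec_pos hMx
    simpa only [star_trivial, ← mulVec_mulVec, dotProduct_mulVec, vecMul_transpose] using this

open scoped MatrixOrder in
lemma logdet_combo {n : ℕ} {A B : Matrix (Fin n) (Fin n) ℝ} (hA : A.PosDef) (hB : B.PosDef)
    {l : ℝ} (h0 : 0 < l) (h1 : l < 1) :
    (l * Real.log A.det + (1-l) * Real.log B.det ≤ Real.log (l • A + (1-l) • B).det) ∧
    (A ≠ B → l * Real.log A.det + (1-l) * Real.log B.det < Real.log (l • A + (1-l) • B).det) := by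
  classical
  set R := CFC.sqrt A with hRdef
  have hRps : R.PosSemidef := (CFC.sqrt_nonneg A).posSemidef
  have hRR : R * R = A := CFC.sqrt_mul_sqrt_self A hA.posSemidef.nonneg
  have hdetA : 0 < A.det := hA.det_pos
  have detR2 : R.det * R.det = A.det := by rw [← det_mul, hRR]
  have hdetR : IsUnit R.det := by
    refine isUnit_iff_ne_zero.mpr fun h => ?_
    rw [h, mul_zero] at detR2; linarith
  have hRsym : Rᵀ = R := by
    have := hRps.isHermitian
    unfold Matrix.IsHermitian at this
    simpa using this
  set C : Matrix (Fin n) (Fin n) ℝ := R⁻¹ * B * R⁻¹ with hCdef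
  have hC : C.PosDef := by
    have h1' : (R⁻¹)ᵀ = R⁻¹ := by rw [transpose_nonsing_inv, hRsym]
    have := posDef_conj (M := R⁻¹) hB (isUnit_nonsing_inv_det _ hdetR)
    rwa [h1'] at this
  have keyB : R * C * R = B := by
    rw [hCdef]
    calc R * (R⁻¹ * B * R⁻¹) * R = (R * R⁻¹) * B * (R⁻¹ * R) := by noncomm_ring
    _ = B := by rw [mul_nonsing_inv _ hdetR, nonsing_inv_mul _ hdetR, one_mul, mul_one]
  have key2 : l • A + (1-l) • B = R * (l • (1 : Matrix (Fin n) (Fin n) ℝ) + (1-l) • C) * R := by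
    rw [mul_add, add_mul]
    congr 1
    · rw [mul_smul_comm, smul_mul_assoc, mul_one, hRR]
    · rw [mul_smul_comm, smul_mul_assoc, keyB]
  have hCh : C.IsHermitian := hC.isHermitian
  set lam := hCh.eigenvalues with hlam
  have hpos : ∀ i, 0 < lam i := hC.eigenvalues_pos
  set U : Matrix (Fin n) (Fin n) ℝ := (hCh.eigenvectorUnitary : Matrix (Fin n) (Fin n) ℝ) with hUdef
  have hUU : U * star U = 1 := (Matrix.mem_unitaryGroup_iff).mp hCh.eigenvectorUnitary.2
  have hspec : C = U * diagonal lam * star U := by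
    have := hCh.spectral_theorem
    simpa using this
  have key3 : l • (1 : Matrix (Fin n) (Fin n) ℝ) + (1-l) • C
      = U * diagonal (fun i => l + (1-l) * lam i) * star U := by
    have d1 : (1 : Matrix (Fin n) (Fin n) ℝ) = U * 1 * star U := by
      rw [mul_one, hUU]
    rw [hspec]
    conv_lhs => rw [d1]
    rw [← smul_mul_assoc, ← mul_smul_comm, ← smul_mul_assoc, ← mul_smul_comm, ← add_mul, ← mul_add]
    congr 2
    ext i j
    by_cases h : i = j <;> simp [Matrix.diagonal_apply, Matrix.one_apply, h]
  have detUU : U.det * (star U).det = 1 := by rw [← det_mul, hUU, det_one]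
  have detconj : ∀ D : Matrix (Fin n) (Fin n) ℝ, (U * D * star U).det = D.det := by
    intro D
    rw [det_mul, det_mul]
    calc U.det * D.det * (star U).det = D.det * (U.det * (star U).det) := by ring
    _ = D.det := by rw [detUU, mul_one]
  have detC : C.det = ∏ i, lam i := by
    rw [hspec, detconj, det_diagonal]
  have detB : B.det = A.det * ∏ i, lam i := by
    rw [← keyB, det_mul, det_mul, detC, ← detR2]; ring
  have detMix : (l • A + (1-l) • B).det = A.det * ∏ i, (l + (1-l) * lam i) := by
    rw [key2, det_mul, det_mul, key3, detconj, det_diagonal, ← detR2]; ring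
  have hfac : ∀ i, 0 < l + (1-l) * lam i := fun i => by nlinarith [hpos i]
  have logMix : Real.log (l • A + (1-l) • B).det
      = Real.log A.det + ∑ i, Real.log (l + (1-l) * lam i) := by
    rw [detMix, Real.log_mul hdetA.ne' (Finset.prod_pos fun i _ => hfac i).ne',
      Real.log_prod (fun i _ => (hfac i).ne')]
  have logB : Real.log B.det = Real.log A.det + ∑ i, Real.log (lam i) := by
    rw [detB, Real.log_mul hdetA.ne' (Finset.prod_pos fun i _ => hpos i).ne',
      Real.log_prod (fun i _ => (hpos i).ne')]
  have hle : ∀ i, (1-l) * Real.log (lam i) ≤ Real.log (l + (1-l) * lam i) := by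
    intro i
    have := strictConcaveOn_log_Ioi.concaveOn.2 (Set.mem_Ioi.mpr one_pos)
      (Set.mem_Ioi.mpr (hpos i)) h0.le (show (0:ℝ) ≤ 1 - l by linarith)
      (show l + (1 - l) = 1 by ring)
    simpa [Real.log_one] using this
  have hlt : ∀ i, lam i ≠ 1 → (1-l) * Real.log (lam i) < Real.log (l + (1-l) * lam i) := by
    intro i hne
    have := strictConcaveOn_log_Ioi.2 (Set.mem_Ioi.mpr one_pos)
      (Set.mem_Ioi.mpr (hpos i)) (fun h => hne h.symm) h0
      (show (0:ℝ) < 1 - l by linarith) (show l + (1 - l) = 1 by ring)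
    simpa [Real.log_one] using this
  have expand : l * Real.log A.det + (1-l) * (Real.log A.det + ∑ i, Real.log (lam i))
      = Real.log A.det + ∑ i, ((1-l) * Real.log (lam i)) := by
    rw [← Finset.mul_sum]; ring
  constructor
  · rw [logMix, logB]
    have hsum : ∑ i, ((1-l) * Real.log (lam i)) ≤ ∑ i, Real.log (l + (1-l) * lam i) :=
      Finset.sum_le_sum (fun i _ => hle i)
    linarith [hsum, expand]
  · intro hAB
    obtain ⟨i0, hi0⟩ : ∃ i, lam i ≠ 1 := by
      by_contra h
      push_neg at h
      have hd : diagonal lam = 1 := by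
        ext i j
        by_cases hij : i = j <;> simp [Matrix.diagonal_apply, Matrix.one_apply, hij, h]
      have hC1 : C = 1 := by rw [hspec, hd, mul_one, hUU]
      refine hAB ?_
      have hBA : B = A := by rw [← keyB, hC1, mul_one, hRR]
      exact hBA.symm
    rw [logMix, logB]
    have hsum : ∑ i, ((1-l) * Real.log (lam i)) < ∑ i, Real.log (l + (1-l) * lam i) :=
      Finset.sum_lt_sum (fun i _ => hle i) ⟨i0, Finset.mem_univ i0, hlt i0 hi0⟩
    linarith [hsum, expand]

lemma log_gaussPdf1' {y μ s2 : ℝ} (h : 0 < s2) :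
    Real.log (gaussPdf1 y μ s2) = (-(1:ℝ)/2) * Real.log (2 * Real.pi * s2)
      + (-(y - μ)^2 / (2 * s2)) := by
  have hpos : 0 < 2 * Real.pi * s2 := by positivity
  unfold gaussPdf1
  rw [Real.log_mul (by positivity) (Real.exp_ne_zero _), Real.log_rpow hpos, Real.log_exp]

set_option maxHeartbeats 1000000 in
/-- The variational objective is strictly concave on
`ℝ^m × {positive-definite matrices}`. -/
theorem stmt9 (m T : ℕ) (hm : 1 ≤ m) (hT : 1 ≤ T)
    (φ : Fin T → Fin m → ℝ) (y : Fin T → ℝ)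
    (σ2 : ℝ) (hσ2 : 0 < σ2) (w0 : Fin m → ℝ)
    (S0 : Matrix (Fin m) (Fin m) ℝ) (hS0 : S0.PosDef) :
    ∀ (wb₁ wb₂ : Fin m → ℝ) (S₁ S₂ : Matrix (Fin m) (Fin m) ℝ),
      S₁.PosDef → S₂.PosDef → (wb₁, S₁) ≠ (wb₂, S₂) →
      ∀ l : ℝ, 0 < l → l < 1 →
        (l • S₁ + (1 - l) • S₂).PosDef ∧
          l * Lobj φ y σ2 w0 S0 wb₁ S₁ + (1 - l) * Lobj φ y σ2 w0 S0 wb₂ S₂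
            < Lobj φ y σ2 w0 S0 (l • wb₁ + (1 - l) • wb₂)
                (l • S₁ + (1 - l) • S₂) := by
  intro wb₁ wb₂ S₁ S₂ hS1 hS2 hne l hl0 hl1
  refine ⟨posDef_combo hS1 hS2 hl0 hl1, ?_⟩
  set wm : Fin m → ℝ := l • wb₁ + (1 - l) • wb₂ with hwm
  set Sm : Matrix (Fin m) (Fin m) ℝ := l • S₁ + (1 - l) • S₂ with hSm
  have hS0inv : (S0⁻¹).PosDef := hS0.inv
  have hS0sym : (S0⁻¹)ᵀ = S0⁻¹ := by
    have := hS0inv.isHermitian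
    unfold Matrix.IsHermitian at this
    simpa using this
  set qd : ℝ := (wb₂ - wb₁) ⬝ᵥ S0⁻¹ *ᵥ (wb₂ - wb₁) with hqd
  -- per-t dot product combination
  have hdot : ∀ t, wm ⬝ᵥ φ t = l * (wb₁ ⬝ᵥ φ t) + (1 - l) * (wb₂ ⬝ᵥ φ t) := by
    intro t; simp [hwm, add_dotProduct, smul_dotProduct]
  have hquadS : ∀ t, φ t ⬝ᵥ Sm *ᵥ φ t
      = l * (φ t ⬝ᵥ S₁ *ᵥ φ t) + (1 - l) * (φ t ⬝ᵥ S₂ *ᵥ φ t) := by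
    intro t
    simp [hSm, add_mulVec, smul_mulVec, dotProduct_add, dotProduct_smul]
  have htr : (S0⁻¹ * Sm).trace = l * (S0⁻¹ * S₁).trace + (1 - l) * (S0⁻¹ * S₂).trace := by
    rw [hSm, mul_add, mul_smul_comm, mul_smul_comm, trace_add, trace_smul, trace_smul]
    simp
  have hw0 : w0 - wm = l • (w0 - wb₁) + (1 - l) • (w0 - wb₂) := by
    funext i
    simp [hwm]
    ring
  have hsub : (w0 - wb₁) - (w0 - wb₂) = wb₂ - wb₁ := by
    funext i; simp
  have hquadw : (w0 - wm) ⬝ᵥ S0⁻¹ *ᵥ (w0 - wm)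
      = l * ((w0 - wb₁) ⬝ᵥ S0⁻¹ *ᵥ (w0 - wb₁))
        + (1 - l) * ((w0 - wb₂) ⬝ᵥ S0⁻¹ *ᵥ (w0 - wb₂)) - l * (1 - l) * qd := by
    rw [hw0, quad_combo hS0sym, hsub, hqd]
  -- per-t log-likelihood combination
  have hper : ∀ t, Real.log (gaussPdf1 (y t) (wm ⬝ᵥ φ t) σ2)
        - (1 / 2) * σ2⁻¹ * (φ t ⬝ᵥ Sm *ᵥ φ t)
      = l * (Real.log (gaussPdf1 (y t) (wb₁ ⬝ᵥ φ t) σ2)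
            - (1 / 2) * σ2⁻¹ * (φ t ⬝ᵥ S₁ *ᵥ φ t))
        + (1 - l) * (Real.log (gaussPdf1 (y t) (wb₂ ⬝ᵥ φ t) σ2)
            - (1 / 2) * σ2⁻¹ * (φ t ⬝ᵥ S₂ *ᵥ φ t))
        + (l * (1 - l) / (2 * σ2)) * (wb₁ ⬝ᵥ φ t - wb₂ ⬝ᵥ φ t) ^ 2 := by
    intro t
    rw [log_gaussPdf1' hσ2, log_gaussPdf1' hσ2, log_gaussPdf1' hσ2, hdot t, hquadS t]
    field_simp
    ring
  have hsum : ∑ t, (Real.log (gaussPdf1 (y t) (wm ⬝ᵥ φ t) σ2)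
        - (1 / 2) * σ2⁻¹ * (φ t ⬝ᵥ Sm *ᵥ φ t))
      = l * (∑ t, (Real.log (gaussPdf1 (y t) (wb₁ ⬝ᵥ φ t) σ2)
            - (1 / 2) * σ2⁻¹ * (φ t ⬝ᵥ S₁ *ᵥ φ t)))
        + (1 - l) * (∑ t, (Real.log (gaussPdf1 (y t) (wb₂ ⬝ᵥ φ t) σ2)
            - (1 / 2) * σ2⁻¹ * (φ t ⬝ᵥ S₂ *ᵥ φ t)))
        + (l * (1 - l) / (2 * σ2)) * ∑ t, (wb₁ ⬝ᵥ φ t - wb₂ ⬝ᵥ φ t) ^ 2 := by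
    rw [Finset.sum_congr rfl (fun t _ => hper t), Finset.sum_add_distrib,
      Finset.sum_add_distrib, ← Finset.mul_sum, ← Finset.mul_sum, ← Finset.mul_sum]
  have hKL : gaussKL wm w0 Sm S0
      = l * gaussKL wb₁ w0 S₁ S0 + (1 - l) * gaussKL wb₂ w0 S₂ S0
        - (1 / 2) * (l * (1 - l)) * qd
        - (1 / 2) * (Real.log Sm.det - l * Real.log S₁.det
            - (1 - l) * Real.log S₂.det) := by
    unfold gaussKL
    rw [htr, hquadw]
    ring
  have key : Lobj φ y σ2 w0 S0 wm Sm
      = l * Lobj φ y σ2 w0 S0 wb₁ S₁ + (1 - l) * Lobj φ y σ2 w0 S0 wb₂ S₂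
        + (l * (1 - l) / (2 * σ2)) * ∑ t, (wb₁ ⬝ᵥ φ t - wb₂ ⬝ᵥ φ t) ^ 2
        + (1 / 2) * (l * (1 - l)) * qd
        + (1 / 2) * (Real.log Sm.det - l * Real.log S₁.det
            - (1 - l) * Real.log S₂.det) := by
    unfold Lobj
    rw [hsum, hKL]
    ring
  have hsq : 0 ≤ ∑ t, (wb₁ ⬝ᵥ φ t - wb₂ ⬝ᵥ φ t) ^ 2 :=
    Finset.sum_nonneg fun t _ => sq_nonneg _
  have hc1 : 0 < l * (1 - l) / (2 * σ2) := by
    have : 0 < 1 - l := by linarith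
    positivity
  have hT1 : 0 ≤ (l * (1 - l) / (2 * σ2)) * ∑ t, (wb₁ ⬝ᵥ φ t - wb₂ ⬝ᵥ φ t) ^ 2 :=
    mul_nonneg hc1.le hsq
  have hqd0 : 0 ≤ qd := by
    rcases eq_or_ne (wb₂ - wb₁) 0 with h | h
    · rw [hqd, h]; simp
    · have := hS0inv.dotProduct_mulVec_pos h
      rw [hqd]
      simpa only [star_trivial] using this.le
  have hT2 : 0 ≤ (1 / 2) * (l * (1 - l)) * qd := by
    have h1l : 0 < 1 - l := by linarith
    have := mul_pos hl0 h1l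
    nlinarith
  have hld := logdet_combo hS1 hS2 hl0 hl1
  rw [key]
  by_cases hSS : S₁ = S₂
  · have hww : wb₁ ≠ wb₂ := by
      intro h; exact hne (by rw [h, hSS])
    have hqdpos : 0 < qd := by
      have hd : wb₂ - wb₁ ≠ 0 := sub_ne_zero.mpr (Ne.symm hww)
      have := hS0inv.dotProduct_mulVec_pos hd
      rw [hqd]
      simpa only [star_trivial] using this
    have hT2' : 0 < (1 / 2) * (l * (1 - l)) * qd := by
      have h1l : 0 < 1 - l := by linarith
      have := mul_pos hl0 h1l
      nlinarith
    have h3 : 0 ≤ Real.log Sm.det - l * Real.log S₁.det - (1 - l) * Real.log S₂.det := by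
      have h := hld.1
      rw [← hSm] at h
      linarith
    linarith
  · have h3 : 0 < Real.log Sm.det - l * Real.log S₁.det - (1 - l) * Real.log S₂.det := by
      have h := hld.2 hSS
      rw [← hSm] at h
      linarith
    linarith
end
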